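/- Log-space representation of the geometric log-sum-exp: assume the kernel matrix K = (exp(−c_{ij}/2))_{i,j} is positive definite. For every f ∈ ℝ^d, Ω_C^*(f) = sup_{l ∈ ℝ^d} ( −log Σ_{i,j=1}^d exp(l_i + l_j − (f_i + f_j + c_{ij})/2) + 2 log Σ_{i=1}^d exp(l_i) ). -/

import Mathlib

open Finset Real Filter

noncomputable section

/-- The probability simplex in `ℝ^d`. -/
def simplexS (d : ℕ) : Set (Fin d → ℝ) := stdSimplex ℝ (Fin d)


open scoped Classical

/-- `Φ_C(α,f) = Σ_{i,j} α_i α_j exp(-(f_i + f_j + c_{ij})/2)`. -/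
def Phi {d : ℕ} (C : Matrix (Fin d) (Fin d) ℝ) (α f : Fin d → ℝ) : ℝ :=
  ∑ i, ∑ j, α i * α j * Real.exp (-(f i + f j + C i j) / 2)

/-- The geometric log-sum-exp `Ω_C^*(f) = -log min_{α ∈ △^d} Φ_C(α, f)`. -/
def OmegaStar {d : ℕ} (C : Matrix (Fin d) (Fin d) ℝ) (f : Fin d → ℝ) : ℝ :=
  -Real.log (sInf ((fun α => Phi C α f) '' simplexS d))

/-- The geometric softmax: the (unique, when the kernel is positive definite) minimizer of
`Φ_C(·, f)` over the simplex. -/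
def gsoftmax {d : ℕ} (C : Matrix (Fin d) (Fin d) ℝ) (f : Fin d → ℝ) : Fin d → ℝ :=
  if h : ∃ α ∈ simplexS d, IsMinOn (fun β => Phi C β f) (simplexS d) α
  then h.choose else fun _ => 0

/-- The soft C-transform `T(f,α)_i = -2 log Σ_j α_j exp((f_j - c_{ij})/2)`. -/
def Tsoft {d : ℕ} (C : Matrix (Fin d) (Fin d) ℝ) (f α : Fin d → ℝ) : Fin d → ℝ :=
  fun i => -2 * Real.log (∑ j, α j * Real.exp ((f j - C i j) / 2))

/-- `f` is the symmetric Sinkhorn potential of `α`: `-f = T(-f, α)`. -/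
def IsSinkhornPotential {d : ℕ} (C : Matrix (Fin d) (Fin d) ℝ) (α f : Fin d → ℝ) : Prop :=
  -f = Tsoft C (-f) α

/-- The symmetric Sinkhorn potential `∇Ω(α)`: the (unique, when the kernel is positive
definite) `f` with `-f = T(-f, α)`. -/
def gradOmega {d : ℕ} (C : Matrix (Fin d) (Fin d) ℝ) (α : Fin d → ℝ) : Fin d → ℝ :=
  if h : ∃ f : Fin d → ℝ, IsSinkhornPotential C α f then h.choose else fun _ => 0

/-- The extrapolation `f^E = -T(-(f - Ω_C^*(f)·1), g-softmax(f)) + Ω_C^*(f)·1`. -/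
def extrap {d : ℕ} (C : Matrix (Fin d) (Fin d) ℝ) (f : Fin d → ℝ) : Fin d → ℝ :=
  fun i => -(Tsoft C (fun j => -(f j - OmegaStar C f)) (gsoftmax C f) i) + OmegaStar C f

/-- The kernel matrix `K = (exp(-c_{ij}/2))_{ij}`. -/
def kernelK {d : ℕ} (C : Matrix (Fin d) (Fin d) ℝ) : Matrix (Fin d) (Fin d) ℝ :=
  Matrix.of fun i j => Real.exp (-(C i j) / 2)

/-- Log-space representation of the geometric log-sum-exp:
`Ω_C^*(f) = sup_{l ∈ ℝ^d} (-log Σ_{i,j} exp(l_i + l_j - (f_i + f_j + c_{ij})/2)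
+ 2 log Σ_i exp(l_i))`. -/
theorem gLSE_log_space_representation (d : ℕ) (hd : 1 ≤ d)
    (C : Matrix (Fin d) (Fin d) ℝ) (hCsym : C.IsSymm) (hCdiag : ∀ i, C i i = 0)
    (hK : (kernelK C).PosDef) (f : Fin d → ℝ) :
    OmegaStar C f = ⨆ l : Fin d → ℝ,
      (-Real.log (∑ i, ∑ j, Real.exp (l i + l j - (f i + f j + C i j) / 2))
        + 2 * Real.log (∑ i, Real.exp (l i))) := by

  classical
  have hdpos : (0:ℝ) < d := by exact_mod_cast hd
  set g : (Fin d → ℝ) → ℝ := fun α => Phi C α f with hg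
  have hgcont : Continuous g := by
    simp only [hg, Phi]
    exact continuous_finset_sum _ fun i _ => continuous_finset_sum _ fun j _ => by fun_prop
  have hScomp : IsCompact (simplexS d) := isCompact_stdSimplex _ _
  have hSne : (simplexS d).Nonempty := by
    refine ⟨fun _ => 1 / d, fun i => by positivity, ?_⟩
    simp [Finset.sum_const]
    field_simp
  obtain ⟨α₀, hα₀S, hα₀min⟩ := hScomp.exists_isMinOn hSne hgcont.continuousOn
  have hpos : ∀ α ∈ simplexS d, 0 < g α := by
    intro α hα
    obtain ⟨hnn, hsum⟩ := hα
    obtain ⟨i0, hi0⟩ : ∃ i, 0 < α i := by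
      by_contra h
      push_neg at h
      have hz : ∀ i, α i = 0 := fun i => le_antisymm (h i) (hnn i)
      simp [hz] at hsum
    refine Finset.sum_pos' (fun i _ => Finset.sum_nonneg fun j _ =>
      mul_nonneg (mul_nonneg (hnn i) (hnn j)) (Real.exp_pos _).le)
      ⟨i0, Finset.mem_univ _, ?_⟩
    exact Finset.sum_pos' (fun j _ =>
      mul_nonneg (mul_nonneg (hnn i0) (hnn j)) (Real.exp_pos _).le)
      ⟨i0, Finset.mem_univ _, mul_pos (mul_pos hi0 hi0) (Real.exp_pos _)⟩
  have hm : 0 < g α₀ := hpos _ hα₀S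
  have hInf : sInf ((fun α => Phi C α f) '' simplexS d) = g α₀ := by
    refine IsLeast.csInf_eq ⟨⟨α₀, hα₀S, rfl⟩, ?_⟩
    rintro _ ⟨β, hβ, rfl⟩
    exact hα₀min hβ
  have hOmega : OmegaStar C f = -Real.log (g α₀) := by rw [OmegaStar, hInf]
  -- membership of normalized exponentials
  have hmem : ∀ l : Fin d → ℝ,
      (fun i => Real.exp (l i) / ∑ k, Real.exp (l k)) ∈ simplexS d := by
    intro l
    have hB : 0 < ∑ k, Real.exp (l k) :=
      Finset.sum_pos (fun i _ => Real.exp_pos _) ⟨⟨0, hd⟩, Finset.mem_univ _⟩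
    exact ⟨fun i => by positivity, by rw [← Finset.sum_div, div_self hB.ne']⟩
  -- key identity
  have key : ∀ l : Fin d → ℝ,
      (-Real.log (∑ i, ∑ j, Real.exp (l i + l j - (f i + f j + C i j) / 2))
        + 2 * Real.log (∑ i, Real.exp (l i)))
      = -Real.log (g (fun i => Real.exp (l i) / ∑ k, Real.exp (l k))) := by
    intro l
    set B := ∑ k, Real.exp (l k) with hB
    have hBpos : 0 < B :=
      Finset.sum_pos (fun i _ => Real.exp_pos _) ⟨⟨0, hd⟩, Finset.mem_univ _⟩
    have hA : (∑ i, ∑ j, Real.exp (l i + l j - (f i + f j + C i j) / 2))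
        = g (fun i => Real.exp (l i) / B) * B ^ 2 := by
      simp only [hg, Phi, Finset.sum_mul]
      refine Finset.sum_congr rfl fun i _ => Finset.sum_congr rfl fun j _ => ?_
      have h1 : Real.exp (l i + l j - (f i + f j + C i j) / 2)
          = Real.exp (l i) * Real.exp (l j) * Real.exp (-(f i + f j + C i j) / 2) := by
        rw [← Real.exp_add, ← Real.exp_add]
        ring_nf
      rw [h1]
      field_simp
    have hgpos : 0 < g (fun i => Real.exp (l i) / B) := hpos _ (hmem l)
    rw [hA, Real.log_mul hgpos.ne' (by positivity), Real.log_pow]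
    push_cast
    ring
  -- upper bound for each l
  have hub : ∀ l : Fin d → ℝ,
      (-Real.log (∑ i, ∑ j, Real.exp (l i + l j - (f i + f j + C i j) / 2))
        + 2 * Real.log (∑ i, Real.exp (l i))) ≤ -Real.log (g α₀) := by
    intro l
    rw [key l]
    have := hα₀min (hmem l)
    exact neg_le_neg (Real.log_le_log hm this)
  have hbdd : BddAbove (Set.range fun l : Fin d → ℝ =>
      (-Real.log (∑ i, ∑ j, Real.exp (l i + l j - (f i + f j + C i j) / 2))
        + 2 * Real.log (∑ i, Real.exp (l i)))) := by
    refine ⟨-Real.log (g α₀), ?_⟩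
    rintro _ ⟨l, rfl⟩
    exact hub l
  rw [hOmega]
  refine le_antisymm ?_ (ciSup_le hub)
  -- lower bound via approximating sequence
  set αs : ℕ → Fin d → ℝ := fun n i => (1 - 1 / (n + 1 : ℝ)) * α₀ i + (1 / (n + 1 : ℝ)) / d
    with hαs
  have htn : ∀ n : ℕ, 0 < 1 / (n + 1 : ℝ) ∧ 1 / (n + 1 : ℝ) ≤ 1 := by
    intro n
    constructor
    · positivity
    · rw [div_le_one (by positivity)]
      linarith [Nat.cast_nonneg (α := ℝ) n]
  have hαspos : ∀ n i, 0 < αs n i := by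
    intro n i
    have h1 := (htn n).1
    have h2 := (htn n).2
    have : 0 ≤ (1 - 1 / (n + 1 : ℝ)) * α₀ i :=
      mul_nonneg (by linarith) (hα₀S.1 i)
    have : 0 < (1 / (n + 1 : ℝ)) / d := by positivity
    simp only [hαs]
    linarith
  have hαsS : ∀ n, αs n ∈ simplexS d := by
    intro n
    refine ⟨fun i => (hαspos n i).le, ?_⟩
    simp only [hαs, Finset.sum_add_distrib, ← Finset.mul_sum, hα₀S.2, Finset.sum_const,
      Finset.card_univ, Fintype.card_fin, nsmul_eq_mul]
    field_simp
    ring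
  have hsum1 : ∀ n, ∑ k, αs n k = 1 := fun n => (hαsS n).2
  have hstep : ∀ n : ℕ, -Real.log (g (αs n)) ≤ ⨆ l : Fin d → ℝ,
      (-Real.log (∑ i, ∑ j, Real.exp (l i + l j - (f i + f j + C i j) / 2))
        + 2 * Real.log (∑ i, Real.exp (l i))) := by
    intro n
    have heq : (fun i => Real.exp (Real.log (αs n i)) / ∑ k, Real.exp (Real.log (αs n k)))
        = αs n := by
      funext i
      have h1 : ∀ k, Real.exp (Real.log (αs n k)) = αs n k := fun k =>
        Real.exp_log (hαspos n k)
      simp only [h1, hsum1 n, div_one]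
    have := le_ciSup hbdd (fun i => Real.log (αs n i))
    rw [key, heq] at this
    exact this
  -- convergence
  have htend : Tendsto (fun n : ℕ => -Real.log (g (αs n))) atTop (nhds (-Real.log (g α₀))) := by
    have h0 : Tendsto (fun n : ℕ => 1 / (n + 1 : ℝ)) atTop (nhds 0) :=
      tendsto_one_div_add_atTop_nhds_zero_nat
    have hαt : Tendsto αs atTop (nhds α₀) := by
      rw [tendsto_pi_nhds]
      intro i
      simp only [hαs]
      have : Tendsto (fun n : ℕ => (1 - 1 / (n + 1 : ℝ)) * α₀ i + (1 / (n + 1 : ℝ)) / d)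
          atTop (nhds ((1 - 0) * α₀ i + 0 / d)) := by
        exact (((tendsto_const_nhds.sub h0).mul tendsto_const_nhds).add (h0.div_const d))
      simpa using this
    have hgt : Tendsto (fun n => g (αs n)) atTop (nhds (g α₀)) :=
      (hgcont.tendsto _).comp hαt
    exact (((Real.continuousAt_log hm.ne').tendsto.comp hgt).neg)
  exact le_of_tendsto htend (Filter.Eventually.of_forall hstep)
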